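/- Lyapunov's theorem: If A is an n×n complex matrix all of whose eigenvalues have negative real part, then for every positive definite Hermitian matrix P there exists a unique Hermitian solution X of AX + XA* = −P, and this X is positive definite. -/

import Mathlib

open scoped ComplexOrder

namespace LyapunovAux

open Matrix Polynomial Filter
open scoped ENNReal NNReal Topology

variable {n : ℕ}

lemma eval_charpoly (A : Matrix (Fin n) (Fin n) ℂ) (μ : ℂ) :
    (A.charpoly).eval μ = (μ • (1 : Matrix (Fin n) (Fin n) ℂ) - A).det := by
  rw [Matrix.charpoly, ← coe_evalRingHom, RingHom.map_det]
  congr 1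
  ext i j
  by_cases h : i = j <;>
    simp [charmatrix_apply, h, Matrix.one_apply, Matrix.smul_apply, Matrix.sub_apply,
      Matrix.diagonal_apply]

lemma mem_spectrum_of_root (A : Matrix (Fin n) (Fin n) ℂ) (μ : ℂ)
    (h : (A.charpoly).eval μ = 0) : μ ∈ spectrum ℂ A := by
  rw [spectrum.mem_iff, Algebra.algebraMap_eq_smul_one, Matrix.isUnit_iff_isUnit_det]
  rw [eval_charpoly] at h
  rw [h]
  exact not_isUnit_zero

lemma aeval_comm {A B X : Matrix (Fin n) (Fin n) ℂ} (h : A * X = X * B) (p : ℂ[X]) :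
    (Polynomial.aeval A p) * X = X * (Polynomial.aeval B p) := by
  have hpow : ∀ k : ℕ, A ^ k * X = X * B ^ k := by
    intro k
    induction k with
    | zero => simp
    | succ k ih =>
      rw [pow_succ, pow_succ, mul_assoc, h, ← mul_assoc, ih, mul_assoc]
  induction p using Polynomial.induction_on' with
  | add p q hp hq => rw [map_add, map_add, add_mul, mul_add, hp, hq]
  | monomial k c =>
    rw [aeval_monomial, aeval_monomial, mul_assoc, hpow, Algebra.algebraMap_eq_smul_one,
      smul_mul_assoc, smul_mul_assoc, one_mul, mul_smul_comm, one_mul]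


lemma sylvester_inj {A : Matrix (Fin n) (Fin n) ℂ}
    (hA : ∀ μ ∈ spectrum ℂ A, μ.re < 0) {X : Matrix (Fin n) (Fin n) ℂ}
    (h : A * X + X * A.conjTranspose = 0) : X = 0 := by
  rcases Nat.eq_zero_or_pos n with hn | hn
  · subst hn; exact Subsingleton.elim _ _
  haveI : NeZero n := ⟨hn.ne'⟩
  set B : Matrix (Fin n) (Fin n) ℂ := -A.conjTranspose with hB
  have hcomm : A * X = X * B := by
    rw [hB, mul_neg]
    exact eq_neg_of_add_eq_zero_left h
  have hXp : X * (Polynomial.aeval B A.charpoly) = 0 := by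
    have := aeval_comm hcomm A.charpoly
    rwa [Matrix.aeval_self_charpoly, zero_mul, eq_comm] at this
  have hunit : IsUnit (Polynomial.aeval B A.charpoly) := by
    by_contra hu
    have h0 : (0 : ℂ) ∈ spectrum ℂ (Polynomial.aeval B A.charpoly) :=
      (spectrum.zero_mem_iff ℂ).mpr hu
    rw [spectrum.map_polynomial_aeval_of_nonempty B A.charpoly
      (spectrum.nonempty_of_isAlgClosed_of_finiteDimensional ℂ B)] at h0
    obtain ⟨μ, hμB, hμ0⟩ := h0
    -- μ ∈ spectrum of -Aᴴ implies -conj μ ∈ spectrum A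
    have hμA' : -(starRingEnd ℂ μ) ∈ spectrum ℂ A := by
      rw [spectrum.mem_iff] at hμB ⊢
      intro hu2
      apply hμB
      have e1 : algebraMap ℂ (Matrix (Fin n) (Fin n) ℂ) μ - B
          = (-(algebraMap ℂ (Matrix (Fin n) (Fin n) ℂ) (-(starRingEnd ℂ μ)) - A))ᴴ := by
        rw [hB]
        simp [Algebra.algebraMap_eq_smul_one, Matrix.conjTranspose_smul]
        abel
      rw [e1, Matrix.isUnit_conjTranspose, IsUnit.neg_iff]
      exact hu2
    have h1 : μ.re > 0 := by
      have := hA _ hμA'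
      simpa using this
    have h2 : μ.re < 0 := hA μ (mem_spectrum_of_root A μ hμ0)
    linarith
  obtain ⟨u, hu⟩ := hunit
  have h2 : X * ((Polynomial.aeval B A.charpoly)
      * ((u⁻¹ : (Matrix (Fin n) (Fin n) ℂ)ˣ) : Matrix (Fin n) (Fin n) ℂ)) = 0 := by
    rw [← mul_assoc, hXp, zero_mul]
  rwa [← hu, Units.mul_inv, mul_one] at h2


lemma pow_tendsto_zero {𝔸 : Type*} [NormedRing 𝔸] [NormedAlgebra ℂ 𝔸] [CompleteSpace 𝔸]
    (a : 𝔸) (h : spectralRadius ℂ a < 1) :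
    Tendsto (fun k : ℕ => a ^ k) atTop (nhds 0) := by
  obtain ⟨r, hr1, hr2⟩ := ENNReal.lt_iff_exists_nnreal_btwn.mp h
  have hgel := spectrum.pow_nnnorm_pow_one_div_tendsto_nhds_spectralRadius a
  have hev : ∀ᶠ k : ℕ in atTop, (‖a ^ k‖₊ : ℝ≥0∞) ^ (1 / (k : ℝ)) < (r : ℝ≥0∞) :=
    hgel.eventually_lt_const hr1
  have hr2' : (r : ℝ) < 1 := by exact_mod_cast hr2
  have hbound : ∀ᶠ k : ℕ in atTop, ‖a ^ k‖ ≤ (r : ℝ) ^ k := by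
    filter_upwards [hev, Filter.eventually_ge_atTop 1] with k hk hk1
    have hk0 : (k : ℝ) ≠ 0 := by positivity
    have h1 : ((‖a ^ k‖₊ : ℝ≥0∞) ^ (1 / (k : ℝ))) ^ (k : ℝ) < (r : ℝ≥0∞) ^ (k : ℝ) :=
      ENNReal.rpow_lt_rpow hk (by positivity : (0:ℝ) < (k:ℝ))
    rw [← ENNReal.rpow_mul, one_div, inv_mul_cancel₀ hk0, ENNReal.rpow_one,
      ENNReal.rpow_natCast] at h1
    have h2 : (‖a ^ k‖₊ : ℝ≥0∞) < ((r ^ k : ℝ≥0) : ℝ≥0∞) := by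
      rwa [ENNReal.coe_pow]
    have h3 : ‖a ^ k‖₊ < r ^ k := by exact_mod_cast h2
    exact_mod_cast h3.le
  exact squeeze_zero_norm' hbound (tendsto_pow_atTop_nhds_zero_of_lt_one r.2 hr2')


lemma isUnit_smul_one {c : ℂ} (hc : c ≠ 0) : IsUnit (c • (1 : Matrix (Fin n) (Fin n) ℂ)) := by
  have h1 : ∀ a b : ℂ, (a • (1 : Matrix (Fin n) (Fin n) ℂ)) * (b • (1 : Matrix (Fin n) (Fin n) ℂ))
      = (a * b) • (1 : Matrix (Fin n) (Fin n) ℂ) := fun a b => by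
    rw [smul_mul_assoc, one_mul, smul_smul]
  exact ⟨⟨c • 1, c⁻¹ • 1,
    by rw [h1, mul_inv_cancel₀ hc, one_smul],
    by rw [h1, inv_mul_cancel₀ hc, one_smul]⟩, rfl⟩

lemma isUnit_smul {c : ℂ} (hc : c ≠ 0) {M : Matrix (Fin n) (Fin n) ℂ} (hM : IsUnit M) :
    IsUnit (c • M) := by
  have h2 : c • M = (c • (1 : Matrix (Fin n) (Fin n) ℂ)) * M := by rw [smul_mul_assoc, one_mul]
  rw [h2]
  exact (isUnit_smul_one hc).mul hM

set_option maxHeartbeats 1000000 in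
lemma solution_posDef {A : Matrix (Fin n) (Fin n) ℂ}
    (hA : ∀ μ ∈ spectrum ℂ A, μ.re < 0) {P X : Matrix (Fin n) (Fin n) ℂ} (hP : P.PosDef)
    (hX : X.IsHermitian) (hEq : A * X + X * A.conjTranspose = -P) : X.PosDef := by
  rcases Nat.eq_zero_or_pos n with hn | hn
  · subst hn
    exact ⟨hX, fun x hx => absurd (Subsingleton.elim x 0) hx⟩
  haveI : NeZero n := ⟨hn.ne'⟩
  -- basic invertibility
  have hN1 : IsUnit ((1 : Matrix (Fin n) (Fin n) ℂ) - A) := by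
    have h1 : (1 : ℂ) ∉ spectrum ℂ A := fun hmem => by
      have := hA 1 hmem; norm_num at this
    have := spectrum.notMem_iff.mp h1
    rwa [RingHom.map_one] at this
  set N : Matrix (Fin n) (Fin n) ℂ := 1 - A with hNdef
  have hNd : IsUnit N.det := (Matrix.isUnit_iff_isUnit_det N).mp hN1
  have hNi : N * N⁻¹ = 1 := Matrix.mul_nonsing_inv N hNd
  have hiN : N⁻¹ * N = 1 := Matrix.nonsing_inv_mul N hNd
  have hNiu : IsUnit (N⁻¹) := ⟨⟨N⁻¹, N, hiN, hNi⟩, rfl⟩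
  set C : Matrix (Fin n) (Fin n) ℂ := (1 + A) * N⁻¹ with hCdef
  set R : Matrix (Fin n) (Fin n) ℂ := N⁻¹ * (P + P) * (N⁻¹)ᴴ with hRdef
  -- R is positive definite
  have hPP : (P + P).PosDef := Matrix.PosDef.of_dotProduct_mulVec_pos (hP.1.add hP.1) fun x hx => by
    rw [Matrix.add_mulVec, dotProduct_add]
    exact add_pos (hP.dotProduct_mulVec_pos hx) (hP.dotProduct_mulVec_pos hx)
  have hR : R.PosDef := by
    refine Matrix.PosDef.of_dotProduct_mulVec_pos ?_ ?_
    · simp only [hRdef, Matrix.IsHermitian, Matrix.conjTranspose_mul,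
        Matrix.conjTranspose_conjTranspose, hPP.1.eq, Matrix.mul_assoc]
    · intro x hx
      have hy : (N⁻¹)ᴴ *ᵥ x ≠ 0 := by
        intro h0
        apply hx
        have hu : IsUnit ((N⁻¹)ᴴ) := (Matrix.isUnit_conjTranspose _).mpr hNiu
        have hinj := (Matrix.mulVec_injective_iff_isUnit).mpr hu
        apply hinj
        rw [h0, Matrix.mulVec_zero]
      have key : star x ⬝ᵥ R *ᵥ x
          = star ((N⁻¹)ᴴ *ᵥ x) ⬝ᵥ (P + P) *ᵥ ((N⁻¹)ᴴ *ᵥ x) := by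
        rw [hRdef, ← Matrix.mulVec_mulVec, ← Matrix.mulVec_mulVec,
          Matrix.dotProduct_mulVec (star x) N⁻¹, Matrix.star_mulVec,
          Matrix.conjTranspose_conjTranspose]
      rw [key]
      exact hPP.dotProduct_mulVec_pos hy
  -- the Stein equation
  have hNC : N * C = 1 + A := by
    have hcomm' : N * (1 + A) = (1 + A) * N := by rw [hNdef]; noncomm_ring
    calc N * ((1 + A) * N⁻¹) = (N * (1 + A)) * N⁻¹ := by rw [Matrix.mul_assoc]
      _ = (1 + A) * (N * N⁻¹) := by rw [hcomm', Matrix.mul_assoc]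
      _ = 1 + A := by rw [hNi, mul_one]
  have hCN : Cᴴ * Nᴴ = (1 + A)ᴴ := by rw [← Matrix.conjTranspose_mul, hNC]
  have hNiN : (N⁻¹)ᴴ * Nᴴ = 1 := by
    rw [← Matrix.conjTranspose_mul, hNi, Matrix.conjTranspose_one]
  have hNNi : Nᴴ * (N⁻¹)ᴴ = 1 := by
    rw [← Matrix.conjTranspose_mul, hiN, Matrix.conjTranspose_one]
  have hmain : N * (X - (R + C * X * Cᴴ)) * Nᴴ = 0 := by
    have h2 : A * X + X * Aᴴ + P = 0 := by rw [hEq]; simp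
    have e1 : N * R * Nᴴ = P + P := by
      calc N * (N⁻¹ * (P + P) * (N⁻¹)ᴴ) * Nᴴ
          = (N * N⁻¹) * (P + P) * ((N⁻¹)ᴴ * Nᴴ) := by noncomm_ring
        _ = P + P := by rw [hNi, hNiN, one_mul, mul_one]
    have e2 : N * (C * X * Cᴴ) * Nᴴ = (1 + A) * X * (1 + A)ᴴ := by
      calc N * (C * X * Cᴴ) * Nᴴ = (N * C) * X * (Cᴴ * Nᴴ) := by noncomm_ring
        _ = (1 + A) * X * (1 + A)ᴴ := by rw [hNC, hCN]
    have e0 : N * (X - (R + C * X * Cᴴ)) * Nᴴ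
        = N * X * Nᴴ - N * R * Nᴴ - N * (C * X * Cᴴ) * Nᴴ := by noncomm_ring
    rw [e0, e1, e2, hNdef, Matrix.conjTranspose_sub, Matrix.conjTranspose_one,
      Matrix.conjTranspose_add, Matrix.conjTranspose_one]
    calc (1 - A) * X * (1 - Aᴴ) - (P + P) - (1 + A) * X * (1 + Aᴴ)
        = -(A * X + X * Aᴴ + P) - (A * X + X * Aᴴ + P) := by noncomm_ring
      _ = 0 := by rw [h2]; simp
  have key : X = R + C * X * Cᴴ := by
    have hzero : X - (R + C * X * Cᴴ) = 0 := by
      calc X - (R + C * X * Cᴴ)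
          = (N⁻¹ * N) * (X - (R + C * X * Cᴴ)) * (Nᴴ * (N⁻¹)ᴴ) := by
            rw [hiN, hNNi, one_mul, mul_one]
        _ = N⁻¹ * (N * (X - (R + C * X * Cᴴ)) * Nᴴ) * (N⁻¹)ᴴ := by noncomm_ring
        _ = 0 := by rw [hmain]; simp
    rw [← sub_eq_zero]
    exact hzero
  -- spectrum of C is inside the open unit disc
  have hCspec : ∀ μ ∈ spectrum ℂ C, ‖μ‖₊ < 1 := by
    intro μ hμ
    by_contra hge
    push_neg at hge
    apply spectrum.mem_iff.mp hμ
    rw [Algebra.algebraMap_eq_smul_one]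
    have hnorm : 1 ≤ Complex.normSq μ := by
      have h1 : (1 : ℝ) ≤ ‖μ‖ := by exact_mod_cast hge
      nlinarith [Complex.sq_norm μ, norm_nonneg μ]
    by_cases hm : μ = -1
    · subst hm
      have hsum : N + (1 + A) = (2:ℂ) • (1 : Matrix (Fin n) (Fin n) ℂ) := by
        rw [hNdef]; module
      have h1C : (-1 : ℂ) • (1 : Matrix (Fin n) (Fin n) ℂ) - C
          = -((N + (1 + A)) * N⁻¹) := by
        rw [add_mul, hNi, hCdef]
        module
      rw [h1C, hsum, IsUnit.neg_iff]
      exact (isUnit_smul_one (by norm_num)).mul hNiu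
    · have hμ1 : μ + 1 ≠ 0 := fun h0 => hm (by linear_combination h0)
      set lam : ℂ := (μ - 1) / (μ + 1) with hlam
      have hlamre : 0 ≤ lam.re := by
        rw [hlam, Complex.div_re]
        have hden : 0 ≤ Complex.normSq (μ + 1) := Complex.normSq_nonneg _
        have hnum : (μ - 1).re * (μ + 1).re / Complex.normSq (μ + 1)
              + (μ - 1).im * (μ + 1).im / Complex.normSq (μ + 1)
            = (Complex.normSq μ - 1) / Complex.normSq (μ + 1) := by
          rw [← add_div]
          congr 1
          simp [Complex.normSq_apply]
          ring
        rw [hnum]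
        apply div_nonneg _ hden
        linarith
      have hlamA : lam ∉ spectrum ℂ A := fun hc => by
        have := hA _ hc; linarith
      have hu2 : IsUnit (lam • (1 : Matrix (Fin n) (Fin n) ℂ) - A) := by
        have := spectrum.notMem_iff.mp hlamA
        rwa [Algebra.algebraMap_eq_smul_one] at this
      have hfac : μ • (1 : Matrix (Fin n) (Fin n) ℂ) - C
          = ((μ + 1) • (lam • (1 : Matrix (Fin n) (Fin n) ℂ) - A)) * N⁻¹ := by
        have hlm : (μ + 1) * lam = μ - 1 := mul_div_cancel₀ _ hμ1
        have h3 : (μ + 1) • (lam • (1 : Matrix (Fin n) (Fin n) ℂ) - A)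
            = μ • N - (1 + A) := by
          rw [smul_sub, smul_smul, hlm, hNdef]
          module
        calc μ • (1 : Matrix (Fin n) (Fin n) ℂ) - C
            = (μ • N) * N⁻¹ - (1 + A) * N⁻¹ := by
              rw [smul_mul_assoc, hNi, hCdef]
          _ = (μ • N - (1 + A)) * N⁻¹ := by rw [sub_mul]
          _ = _ := by rw [h3]
      rw [hfac]
      exact (isUnit_smul hμ1 hu2).mul hNiu
  -- powers of C tend to zero
  have htend : Tendsto (fun k : ℕ => C ^ k) atTop (𝓝 0) := by
    set e := Matrix.toEuclideanCLM (𝕜 := ℂ) (n := Fin n) with he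
    haveI : Nontrivial (Matrix (Fin n) (Fin n) ℂ) := by
      refine ⟨0, 1, fun h01 => ?_⟩
      have := congrFun (congrFun h01 ⟨0, hn⟩) ⟨0, hn⟩
      simp [Matrix.one_apply] at this
    haveI : Nontrivial (EuclideanSpace ℂ (Fin n) →L[ℂ] EuclideanSpace ℂ (Fin n)) := by
      refine ⟨e 0, e 1, fun h01 => ?_⟩
      have := e.injective h01
      exact zero_ne_one this
    have hspec : spectrum ℂ (e C) = spectrum ℂ C := AlgEquiv.spectrum_eq e C
    have hrad : spectralRadius ℂ (e C) < 1 := by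
      have := spectrum.spectralRadius_lt_of_forall_lt (a := e C) (r := 1)
        (fun z hz => by rw [hspec] at hz; exact hCspec z hz)
      simpa using this
    have h0 : Tendsto (fun k : ℕ => (e C) ^ k) atTop (𝓝 0) := pow_tendsto_zero _ hrad
    set lmap : (EuclideanSpace ℂ (Fin n) →L[ℂ] EuclideanSpace ℂ (Fin n)) →ₗ[ℂ]
        Matrix (Fin n) (Fin n) ℂ :=
      { toFun := fun M => e.symm M, map_add' := fun a b => map_add _ a b,
        map_smul' := fun c a => map_smul _ c a } with hlmap
    have hcont := lmap.continuous_of_finiteDimensional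
    have heq : ∀ k : ℕ, C ^ k = lmap ((e C) ^ k) := fun k => by
      show C ^ k = e.symm ((e C) ^ k)
      rw [← map_pow, StarAlgEquiv.symm_apply_apply]
    have h2 := (hcont.tendsto 0).comp h0
    rw [map_zero] at h2
    exact (funext heq : (fun k : ℕ => C ^ k) = fun k => lmap ((e C) ^ k)) ▸ h2
  -- quadratic form argument
  refine Matrix.PosDef.of_dotProduct_mulVec_pos hX fun x hx => ?_
  set φ : Matrix (Fin n) (Fin n) ℂ → ℝ := fun M => (star x ⬝ᵥ M *ᵥ x).re with hφ
  have hφadd : ∀ M M', φ (M + M') = φ M + φ M' := fun M M' => by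
    simp [hφ, Matrix.add_mulVec, dotProduct_add]
  have hstep : ∀ k : ℕ, C ^ k * X * (C ^ k)ᴴ
      = C ^ k * R * (C ^ k)ᴴ + C ^ (k + 1) * X * (C ^ (k + 1))ᴴ := by
    intro k
    have e3 : C ^ (k + 1) * X * (C ^ (k + 1))ᴴ = C ^ k * (C * X * Cᴴ) * (C ^ k)ᴴ := by
      rw [pow_succ, Matrix.conjTranspose_mul]
      simp only [Matrix.mul_assoc]
    conv_lhs => rw [key]
    rw [e3, Matrix.mul_add, Matrix.add_mul]
  have hRpos : ∀ k : ℕ, 0 ≤ φ (C ^ k * R * (C ^ k)ᴴ) := fun k =>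
    (hR.posSemidef.mul_mul_conjTranspose_same (C ^ k)).re_dotProduct_nonneg x
  have hXk : ∀ k : ℕ, φ (C ^ k * X * (C ^ k)ᴴ)
      = φ (C ^ k * R * (C ^ k)ᴴ) + φ (C ^ (k + 1) * X * (C ^ (k + 1))ᴴ) := fun k => by
    rw [hstep k, hφadd]
  have hanti : Antitone (fun k : ℕ => φ (C ^ k * X * (C ^ k)ᴴ)) := by
    apply antitone_nat_of_succ_le
    intro k
    rw [hXk k]
    linarith [hRpos k]
  have hlim : Tendsto (fun k : ℕ => φ (C ^ k * X * (C ^ k)ᴴ)) atTop (𝓝 0) := by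
    have hc : Continuous fun M : Matrix (Fin n) (Fin n) ℂ => φ (M * X * Mᴴ) := by
      apply Complex.continuous_re.comp
      exact Continuous.dotProduct continuous_const
        (Continuous.matrix_mulVec
          ((continuous_id.matrix_mul continuous_const).matrix_mul
            continuous_id.matrix_conjTranspose) continuous_const)
    have h2 : Tendsto (fun k : ℕ => φ (C ^ k * X * (C ^ k)ᴴ)) atTop
        (𝓝 (φ (0 * X * (0 : Matrix (Fin n) (Fin n) ℂ)ᴴ))) := (hc.tendsto 0).comp htend
    simpa [hφ] using h2
  have hge0 : ∀ k : ℕ, 0 ≤ φ (C ^ k * X * (C ^ k)ᴴ) := fun k =>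
    le_of_tendsto hlim (Filter.eventually_atTop.mpr ⟨k, fun m hm => hanti hm⟩)
  have hfinal : 0 < φ X := by
    have h0 := hXk 0
    simp only [pow_zero, one_mul, Matrix.conjTranspose_one, mul_one] at h0
    have hRx : 0 < φ R := by
      have := hR.dotProduct_mulVec_pos hx
      rw [Complex.lt_def] at this
      simpa [hφ] using this.1
    have h1 := hge0 1
    linarith
  -- conclude
  have hself : star (star x ⬝ᵥ X *ᵥ x) = star x ⬝ᵥ X *ᵥ x := by
    conv_rhs => rw [← hX.eq]
    rw [Matrix.star_dotProduct, star_star, Matrix.star_mulVec, Matrix.dotProduct_mulVec]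
  rw [Complex.lt_def]
  constructor
  · simpa using hfinal
  · have him : (star x ⬝ᵥ X *ᵥ x).im = 0 := by
      have := congrArg Complex.im hself
      simp at this
      linarith
    simp [him]

end LyapunovAux

open Matrix LyapunovAux in
theorem lyapunov_theorem (n : ℕ) (A : Matrix (Fin n) (Fin n) ℂ)
    (hA : ∀ μ ∈ spectrum ℂ A, μ.re < 0)
    (P : Matrix (Fin n) (Fin n) ℂ) (hP : P.PosDef) :
    (∃! X : Matrix (Fin n) (Fin n) ℂ, X.IsHermitian ∧ A * X + X * A.conjTranspose = -P) ∧
    ∀ X : Matrix (Fin n) (Fin n) ℂ, X.IsHermitian → A * X + X * A.conjTranspose = -P →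
      X.PosDef := by
  refine ⟨?_, fun X hX1 hX2 => solution_posDef hA hP hX1 hX2⟩
  set L : Matrix (Fin n) (Fin n) ℂ →ₗ[ℂ] Matrix (Fin n) (Fin n) ℂ :=
    { toFun := fun Y => A * Y + Y * A.conjTranspose,
      map_add' := fun Y Z => by noncomm_ring,
      map_smul' := fun c Y => by
        simp only [RingHom.id_apply]
        rw [mul_smul_comm, smul_mul_assoc, smul_add] } with hL
  have hinj : Function.Injective L := by
    intro Y Z h
    have h2 : L (Y - Z) = 0 := by rw [map_sub, h, sub_self]
    have h2' : A * (Y - Z) + (Y - Z) * A.conjTranspose = 0 := h2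
    have h3 := sylvester_inj hA h2'
    rwa [sub_eq_zero] at h3
  have hsurj : Function.Surjective L := LinearMap.injective_iff_surjective.mp hinj
  obtain ⟨X0, hX0⟩ := hsurj (-P)
  have hX0' : A * X0 + X0 * A.conjTranspose = -P := hX0
  have hX0herm : X0.IsHermitian := by
    have hc : A * X0ᴴ + X0ᴴ * Aᴴ = -P := by
      have h4 := congrArg Matrix.conjTranspose hX0'
      rw [Matrix.conjTranspose_add, Matrix.conjTranspose_mul, Matrix.conjTranspose_mul,
        Matrix.conjTranspose_conjTranspose, Matrix.conjTranspose_neg, hP.1.eq] at h4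
      rw [add_comm] at h4
      exact h4
    have h5 : L X0ᴴ = L X0 := by
      show A * X0ᴴ + X0ᴴ * Aᴴ = A * X0 + X0 * Aᴴ
      rw [hc, hX0']
    exact hinj h5
  refine ⟨X0, ⟨hX0herm, hX0'⟩, ?_⟩
  rintro Y ⟨hY1, hY2⟩
  apply hinj
  show A * Y + Y * Aᴴ = A * X0 + X0 * Aᴴ
  rw [hY2, hX0']
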